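/- arXiv:1310.0530 — 2 statements merged into one kernel-verified Lean document; each statement's English description precedes it below -/
import Mathlib

section
/- Let H be a 2×2 matrix over R and let d₀, d₁ ∈ ℤ. Define the scalar filters H_i(z) := H_{i0}(z²) + z·H_{i1}(z²) for i = 0, 1. Then both scalar filters are whole-sample symmetric with group delays d₀ and d₁ respectively — i.e., σH_i = z^{2d_i}·H_i for i = 0, 1 — if and only if the matrix relation σH = diag(z^{d₀}, z^{d₁})·H·diag(1, z) holds. -/
open LaurentPolynomial Matrix

noncomputable section

/-- `R` = the ring `ℝ[z,z⁻¹]` of Laurent polynomials with real coefficients. -/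
abbrev R2 := LaurentPolynomial ℝ

/-- 2×2 matrices over `R`. -/
abbrev M2 := Matrix (Fin 2) (Fin 2) R2

/-- `SL(2,R)`. -/
abbrev SL2 := Matrix.SpecialLinearGroup (Fin 2) R2

/-- The ℝ-algebra involution `σ` determined by `σ(z) = z⁻¹`. -/
def σ : R2 ≃ₐ[ℝ] R2 := LaurentPolynomial.invert

/-- Entrywise application of `σ` to a matrix; plays the role of `H(z⁻¹)`. -/
def mσ (H : M2) : M2 := H.map fun f => σ f

/-- `Λ = diag(1, z⁻¹)`. -/
def Λm : M2 := Matrix.diagonal ![1, T (-1)]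

/-- `Λ⁻¹ = diag(1, z)`. -/
def Λim : M2 := Matrix.diagonal ![1, T 1]

/-- `L = diag(1, -1)`. -/
def Lm : M2 := Matrix.diagonal ![1, -1]

/-- `J = [[0,1],[1,0]]`. -/
def Jm : M2 := !![0, 1; 1, 0]

/-- Upper-triangular lifting matrix `υ(S) = [[1,S],[0,1]]`. -/
def umat (S : R2) : M2 := !![1, S; 0, 1]

/-- Lower-triangular lifting matrix `λ(S) = [[1,0],[S,1]]`. -/
def lmat (S : R2) : M2 := !![1, 0; S, 1]

/-- Unimodular gain-scaling matrix `D_K = diag(1/K, K)`. -/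
def DKm (K : ℝ) : M2 := Matrix.diagonal ![C K⁻¹, C K]

/-- Conjugation `γ_K(A) = D_K · A · D_K⁻¹`. -/
def γm (K : ℝ) (A : M2) : M2 := DKm K * A * (DKm K)⁻¹

/-- Substitution `z ↦ z²` on Laurent polynomials. -/
def sub2 : R2 →ₐ[ℝ] R2 :=
  AddMonoidAlgebra.mapDomainAlgHom ℝ ℝ
    (AddMonoidHom.mk' (fun n : ℤ => 2 * n) (by intro a b; ring))

/-- The scalar filter `H_i(z) = H_{i0}(z²) + z·H_{i1}(z²)` of row `i` of `H`. -/
def scal (H : M2) (i : Fin 2) : R2 := sub2 (H i 0) + T 1 * sub2 (H i 1)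

/-- Order of a (nonzero) Laurent polynomial: largest minus smallest exponent
with nonzero coefficient. -/
def lorder (f : R2) : ℤ := WithBot.unbotD 0 f.coeff.support.max - WithTop.untopD 0 f.coeff.support.min

/-- Evaluation of a Laurent polynomial at a (nonzero) real number. -/
def lev (x : ℝ) (f : R2) : ℝ := f.coeff.sum fun n a => a * x ^ n

/-- Combined support (in the exponent variable) of all entries of a matrix. -/
def msupp (H : M2) : Finset ℤ :=
  Finset.univ.biUnion fun p : Fin 2 × Fin 2 => (H p.1 p.2).coeff.support

/-- Polyphase order of a (nonzero) matrix Laurent polynomial `H = Σ h(n) z⁻ⁿ`: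
`d - c` where `[c,d]` is the smallest interval with `h(c) ≠ 0 ≠ h(d)`. -/
def morder (H : M2) : ℤ := WithBot.unbotD 0 (msupp H).max - WithTop.untopD 0 (msupp H).min

/-- The product `S_{N-1} ⋯ S_1 · S_0`. -/
def prodRev {M : Type*} [Monoid M] {N : ℕ} (SS : Fin N → M) : M :=
  ((List.ofFn SS).reverse).prod

/-- Partial products: `partialE SS B (n+1) = S_n ⋯ S_0 · B` and `partialE SS B 0 = B`. -/
def partialE {M : Type*} [Monoid M] {N : ℕ} (SS : Fin N → M) (B : M) : ℕ → M
  | 0 => B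
  | n + 1 => (if h : n < N then SS ⟨n, h⟩ else 1) * partialE SS B n

/-- `A` is an upper-triangular lifting matrix. -/
def IsUpper (A : M2) : Prop := ∃ S : R2, A = umat S

/-- `A` is a lower-triangular lifting matrix. -/
def IsLower (A : M2) : Prop := ∃ S : R2, A = lmat S

/-- Strict alternation of the predicates `up`/`lo` along a cascade: no two
consecutive factors are both upper-triangular or both lower-triangular. -/
def AlternatingP {α : Type*} (up lo : α → Prop) {N : ℕ} (SS : Fin N → α) : Prop :=
  ∀ (i : ℕ) (h : i + 1 < N),
    ¬(up (SS ⟨i, by omega⟩) ∧ up (SS ⟨i + 1, h⟩)) ∧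
    ¬(lo (SS ⟨i, by omega⟩) ∧ lo (SS ⟨i + 1, h⟩))

/-- Strict alternation of triangularity along a cascade of matrices. -/
def Alternating {N : ℕ} (SS : Fin N → M2) : Prop := AlternatingP IsUpper IsLower SS

/-- An irreducible cascade of lifting matrices: every factor is a lifting matrix,
no factor is the identity, and triangularity strictly alternates. -/
def IrrCascade {N : ℕ} (SS : Fin N → M2) : Prop :=
  (∀ i, (IsUpper (SS i) ∨ IsLower (SS i)) ∧ SS i ≠ 1) ∧ Alternating SS


lemma sub2_apply_even (f : R2) (a : ℤ) : (sub2 f).coeff (2 * a) = f.coeff a := by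
  show Finsupp.mapDomain _ f.coeff (2 * a) = f.coeff a
  exact Finsupp.mapDomain_apply (fun x y h => by simpa using h) f.coeff a

lemma sub2_apply_odd (f : R2) (n : ℤ) (h : ¬ (2 ∣ n)) : (sub2 f).coeff n = 0 := by
  show Finsupp.mapDomain _ f.coeff n = 0
  refine Finsupp.mapDomain_notin_range _ _ ?_
  rintro ⟨a, ha⟩
  exact h ⟨a, ha.symm⟩

lemma T_mul_apply (m : ℤ) (f : R2) (n : ℤ) : (T m * f : R2).coeff n = f.coeff (n - m) := by
  show (AddMonoidAlgebra.single m (1:ℝ) * f).coeff n = f.coeff (n - m)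
  rw [AddMonoidAlgebra.coeff_single_mul_apply, one_mul]
  congr 1; ring

lemma add_apply' (f g : R2) (n : ℤ) : (f + g : R2).coeff n = f.coeff n + g.coeff n := rfl

lemma scal_apply_even (f g : R2) (m : ℤ) :
    (sub2 f + T 1 * sub2 g : R2).coeff (2 * m) = f.coeff m := by
  rw [add_apply', T_mul_apply, sub2_apply_even, sub2_apply_odd g _ (by omega), add_zero]

lemma scal_apply_odd (f g : R2) (m : ℤ) :
    (sub2 f + T 1 * sub2 g : R2).coeff (2 * m + 1) = g.coeff m := by
  rw [add_apply', T_mul_apply, sub2_apply_odd f _ (by omega),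
    show 2 * m + 1 - 1 = 2 * m by ring, sub2_apply_even, zero_add]

lemma key (f g : R2) (d : ℤ) :
    σ (sub2 f + T 1 * sub2 g) = T (2 * d) * (sub2 f + T 1 * sub2 g) ↔
      (σ f = T d * f ∧ σ g = T (d + 1) * g) := by
  constructor
  · intro h
    have hc : ∀ n : ℤ, (sub2 f + T 1 * sub2 g : R2).coeff (-n)
        = (sub2 f + T 1 * sub2 g : R2).coeff (n - 2 * d) := by
      intro n
      have h2 := congrArg (fun q : R2 => q.coeff n) h
      simp only [T_mul_apply, σ, invert_apply] at h2
      exact h2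
    constructor
    · ext m
      have := hc (2 * m)
      rw [show -(2 * m) = 2 * (-m) by ring, show 2 * m - 2 * d = 2 * (m - d) by ring,
        scal_apply_even, scal_apply_even] at this
      rw [T_mul_apply, σ, invert_apply]
      exact this
    · ext m
      have := hc (2 * m - 1)
      rw [show -(2 * m - 1) = 2 * (-m) + 1 by ring,
        show 2 * m - 1 - 2 * d = 2 * (m - d - 1) + 1 by ring,
        scal_apply_odd, scal_apply_odd] at this
      rw [T_mul_apply, σ, invert_apply]
      rw [show m - (d + 1) = m - d - 1 by ring]
      exact this
  · rintro ⟨hf, hg⟩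
    ext n
    have hf' : ∀ m : ℤ, f.coeff (-m) = f.coeff (m - d) := by
      intro m
      have := congrArg (fun q : R2 => q.coeff m) hf
      simp only [T_mul_apply, σ, invert_apply] at this
      exact this
    have hg' : ∀ m : ℤ, g.coeff (-m) = g.coeff (m - (d + 1)) := by
      intro m
      have := congrArg (fun q : R2 => q.coeff m) hg
      simp only [T_mul_apply, σ, invert_apply] at this
      exact this
    rw [σ, invert_apply]
    show (sub2 f + T 1 * sub2 g : R2).coeff (-n) = _
    rw [T_mul_apply]
    rcases Int.even_or_odd n with ⟨m, hm⟩ | ⟨m, hm⟩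
    · subst hm
      rw [show -(m + m) = 2 * (-m) by ring, show m + m - 2 * d = 2 * (m - d) by ring,
        scal_apply_even, scal_apply_even]
      exact hf' m
    · subst hm
      rw [show -(2 * m + 1) = 2 * (-(m + 1)) + 1 by ring,
        show 2 * m + 1 - 2 * d = 2 * (m - d) + 1 by ring,
        scal_apply_odd, scal_apply_odd]
      have := hg' (m + 1)
      rw [show m + 1 - (d + 1) = m - d by ring] at this
      exact this

/-- polyphase characterization of whole-sample symmetry,
cf. Brislawn–Wohlberg, Lemma 2.  Both scalar filters `H_i(z) = H_{i0}(z²) + z·H_{i1}(z²)`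
are whole-sample symmetric with group delays `d₀`, `d₁` (i.e. `σH_i = z^{2dᵢ}·H_i`)
iff `σH = diag(z^{d₀}, z^{d₁}) · H · diag(1, z)`. -/
theorem stmt0 (H : M2) (d₀ d₁ : ℤ) :
    (σ (scal H 0) = T (2 * d₀) * scal H 0 ∧ σ (scal H 1) = T (2 * d₁) * scal H 1) ↔
      mσ H = Matrix.diagonal ![T d₀, T d₁] * H * Matrix.diagonal ![1, T 1] := by
  rw [show scal H 0 = sub2 (H 0 0) + T 1 * sub2 (H 0 1) from rfl,
      show scal H 1 = sub2 (H 1 0) + T 1 * sub2 (H 1 1) from rfl, key, key]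
  rw [← Matrix.ext_iff]
  constructor
  · rintro ⟨⟨h00, h01⟩, ⟨h10, h11⟩⟩ i j
    fin_cases i <;> fin_cases j <;>
      simp [mσ, Matrix.mul_diagonal, Matrix.diagonal_mul, h00, h01, h10, h11]
  · intro h
    have e00 := h 0 0; have e01 := h 0 1; have e10 := h 1 0; have e11 := h 1 1
    simp [mσ, Matrix.mul_diagonal, Matrix.diagonal_mul] at e00 e01 e10 e11
    exact ⟨⟨by rw [e00]; ring, by rw [e01]; ring⟩, by rw [e10]; ring, by rw [e11]; ring⟩
end
end

section
/- Let 𝔖 = (𝒟, 𝒰, ℒ, 𝔅) be a 𝒟-invariant, order-increasing group lifting structure, and suppose H ∈ SL(2,R) has two irreducible group lifting factorizations H = D_K·S_{N−1}⋯S₀·B = D_{K'}·S'_{N'−1}⋯S'₀·B' in 𝔖. Then N' = N, B' = D_α·B where α := K/K', and S'_i = γ_α(S_i) for 0 ≤ i < N. If, in addition, there exist indices i, j ∈ {0,1} and a real z₀ ≠ 0 such that B'_{ij}(z₀) = B_{ij}(z₀) ≠ 0 (evaluating Laurent polynomials at z₀), then the two factorizations are identical: K' = K, B' = B, and S'_i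 = S_i for all i. -/
open LaurentPolynomial Matrix

noncomputable section

/-- A group lifting structure: additive groups `P₀`, `P₁` of lifting filters
(giving the lifting matrix groups `𝒰 = υ(P₀)` and `ℒ = λ(P₁)`), the full
gain-scaling group `𝒟`, and a set `𝔅 ⊆ SL(2,R)` of base filter banks. -/
structure GLS where
  P0 : AddSubgroup R2
  P1 : AddSubgroup R2
  Bset : Set M2
  hB : ∀ B ∈ Bset, Matrix.det B = 1

/-- The upper-triangular lifting matrix group `𝒰 = υ(P₀)`. -/
def GLS.Uset (G : GLS) : Set M2 := umat '' (G.P0 : Set R2)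

/-- The lower-triangular lifting matrix group `ℒ = λ(P₁)`. -/
def GLS.Lset (G : GLS) : Set M2 := lmat '' (G.P1 : Set R2)

/-- `𝒟`-invariance: every `γ_K` (`K ≠ 0`) fixes `𝒰` and `ℒ`. -/
def GLS.DInv (G : GLS) : Prop :=
  ∀ K : ℝ, K ≠ 0 → γm K '' G.Uset = G.Uset ∧ γm K '' G.Lset = G.Lset

/-- An irreducible cascade over `𝒰 ∪ ℒ`. -/
def GLS.IrrCas (G : GLS) {N : ℕ} (SS : Fin N → M2) : Prop :=
  (∀ i, SS i ∈ G.Uset ∪ G.Lset ∧ SS i ≠ 1) ∧ Alternating SS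

/-- The strictly polyphase order-increasing property: along every irreducible
cascade applied to every base filter bank, the polyphase order of the partial
products strictly increases. -/
def GLS.OrderInc (G : GLS) : Prop :=
  ∀ B ∈ G.Bset, ∀ (N : ℕ) (SS : Fin N → M2), G.IrrCas SS →
    ∀ n < N, morder (partialE SS B (n + 1)) > morder (partialE SS B n)
section Basics

lemma umat_mul (a b : R2) : umat a * umat b = umat (a + b) := by
  simp [umat, Matrix.mul_fin_two, add_comm]

lemma lmat_mul (a b : R2) : lmat a * lmat b = lmat (a + b) := by
  simp [lmat, Matrix.mul_fin_two, add_comm]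

lemma umat_zero : umat 0 = 1 := by
  simp [umat, Matrix.one_fin_two]

lemma lmat_zero : lmat 0 = 1 := by
  simp [lmat, Matrix.one_fin_two]

lemma umat_inj {a b : R2} (h : umat a = umat b) : a = b := by
  have := congrFun (congrFun h 0) 1
  simpa [umat] using this

lemma lmat_inj {a b : R2} (h : lmat a = lmat b) : a = b := by
  have := congrFun (congrFun h 1) 0
  simpa [lmat] using this

lemma umat_ne_lmat {a b : R2} (h : umat a = lmat b) : a = 0 ∧ b = 0 := by
  constructor
  · have := congrFun (congrFun h 0) 1
    simpa [umat, lmat] using this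
  · have := congrFun (congrFun h 1) 0
    simpa [umat, lmat] using this.symm

lemma umat_eq_one {a : R2} (h : umat a = 1) : a = 0 := by
  rw [← umat_zero] at h; exact umat_inj h

lemma lmat_eq_one {a : R2} (h : lmat a = 1) : a = 0 := by
  rw [← lmat_zero] at h; exact lmat_inj h

lemma vec_mul_DKm (a b : ℝ) :
    (fun i => (![C a⁻¹, C a] : Fin 2 → R2) i * ![C b⁻¹, C b] i) = ![C (a*b)⁻¹, C (a*b)] := by
  funext i
  fin_cases i <;> simp [← _root_.map_mul, mul_inv] <;> ring_nf

lemma DKm_mul (a b : ℝ) : DKm a * DKm b = DKm (a * b) := by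
  simp only [DKm, Matrix.diagonal_mul_diagonal, vec_mul_DKm]

lemma DKm_one : DKm 1 = 1 := by
  have : (![C (1:ℝ)⁻¹, C 1] : Fin 2 → R2) = fun _ => 1 := by
    funext i; fin_cases i <;> simp
  rw [DKm, this]
  exact Matrix.diagonal_one

lemma DKm_mul_inv {a : ℝ} (ha : a ≠ 0) : DKm a * DKm a⁻¹ = 1 := by
  rw [DKm_mul, mul_inv_cancel₀ ha, DKm_one]

lemma DKm_inv_mul {a : ℝ} (ha : a ≠ 0) : DKm a⁻¹ * DKm a = 1 := by
  rw [DKm_mul, inv_mul_cancel₀ ha, DKm_one]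

lemma DKm_inv {a : ℝ} (ha : a ≠ 0) : (DKm a)⁻¹ = DKm a⁻¹ :=
  Matrix.inv_eq_right_inv (DKm_mul_inv ha)

end Basics
section Gamma

lemma γm_umat {K : ℝ} (hK : K ≠ 0) (s : R2) :
    γm K (umat s) = umat (C (K⁻¹ * K⁻¹) * s) := by
  rw [γm, DKm_inv hK]
  apply Matrix.ext
  intro i j
  fin_cases i <;> fin_cases j <;>
    simp [DKm, umat, Matrix.diagonal_mul, Matrix.mul_diagonal,
      ← _root_.map_mul, ← _root_.map_pow, inv_mul_cancel₀ hK, mul_inv_cancel₀ hK] <;>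
    try rw [_root_.map_mul]; ring

lemma γm_lmat {K : ℝ} (hK : K ≠ 0) (s : R2) :
    γm K (lmat s) = lmat (C (K * K) * s) := by
  rw [γm, DKm_inv hK]
  apply Matrix.ext
  intro i j
  fin_cases i <;> fin_cases j <;>
    simp [DKm, lmat, Matrix.diagonal_mul, Matrix.mul_diagonal,
      ← _root_.map_mul, ← _root_.map_pow, inv_mul_cancel₀ hK, mul_inv_cancel₀ hK] <;>
    try rw [_root_.map_mul]; ring

lemma γm_comp {a b : ℝ} (ha : a ≠ 0) (hb : b ≠ 0) (A : M2) :
    γm a (γm b A) = γm (a * b) A := by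
  simp only [γm, DKm_inv ha, DKm_inv hb, DKm_inv (mul_ne_zero ha hb), mul_inv]
  rw [show DKm a * (DKm b * A * DKm b⁻¹) * DKm a⁻¹
      = (DKm a * DKm b) * A * (DKm b⁻¹ * DKm a⁻¹) by noncomm_ring,
    DKm_mul, DKm_mul]
  ring_nf

lemma γm_one (A : M2) : γm 1 A = A := by
  simp [γm, DKm_one]

lemma γm_mat_one {a : ℝ} (ha : a ≠ 0) : γm a 1 = 1 := by
  rw [γm, mul_one, DKm_inv ha, DKm_mul_inv ha]

lemma γm_eq_one_iff {a : ℝ} (ha : a ≠ 0) {A : M2} : γm a A = 1 ↔ A = 1 := by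
  constructor
  · intro h
    have := congrArg (γm a⁻¹) h
    rw [γm_comp (inv_ne_zero ha) ha, inv_mul_cancel₀ ha, γm_one] at this
    rw [this, γm_mat_one (inv_ne_zero ha)]
  · intro h; subst h; exact γm_mat_one ha

lemma γm_isUpper {a : ℝ} (ha : a ≠ 0) {A : M2} : IsUpper (γm a A) ↔ IsUpper A := by
  constructor
  · rintro ⟨s, hs⟩
    have := congrArg (γm a⁻¹) hs
    rw [γm_comp (inv_ne_zero ha) ha, inv_mul_cancel₀ ha, γm_one, γm_umat (inv_ne_zero ha)] at this
    exact ⟨_, this⟩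
  · rintro ⟨s, hs⟩
    rw [hs, γm_umat ha]
    exact ⟨_, rfl⟩

lemma γm_isLower {a : ℝ} (ha : a ≠ 0) {A : M2} : IsLower (γm a A) ↔ IsLower A := by
  constructor
  · rintro ⟨s, hs⟩
    have := congrArg (γm a⁻¹) hs
    rw [γm_comp (inv_ne_zero ha) ha, inv_mul_cancel₀ ha, γm_one, γm_lmat (inv_ne_zero ha)] at this
    exact ⟨_, this⟩
  · rintro ⟨s, hs⟩
    rw [hs, γm_lmat ha]
    exact ⟨_, rfl⟩

lemma DKm_mul_A {a : ℝ} (ha : a ≠ 0) (A : M2) : DKm a * A = γm a A * DKm a := by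
  rw [γm, DKm_inv ha, mul_assoc, DKm_inv_mul ha, mul_one]

lemma A_mul_DKm {a : ℝ} (ha : a ≠ 0) (A : M2) : A * DKm a = DKm a * γm a⁻¹ A := by
  rw [γm, DKm_inv (inv_ne_zero ha), inv_inv, ← mul_assoc, ← mul_assoc, DKm_mul_inv ha, one_mul]

end Gamma
section Supports

lemma C_mul_apply (c : ℝ) (f : R2) (n : ℤ) : (C c * f).coeff n = c * f.coeff n := by
  exact AddMonoidAlgebra.coeff_single_zero_mul f c n

lemma support_C_mul {c : ℝ} (hc : c ≠ 0) (f : R2) : (C c * f).coeff.support = f.coeff.support := by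
  ext n
  simp [Finsupp.mem_support_iff, C_mul_apply, hc]

lemma DKm_mul_entry (r : ℝ) (X : M2) (i j : Fin 2) :
    (DKm r * X) i j = C (![r⁻¹, r] i) * X i j := by
  rw [DKm, Matrix.diagonal_mul]
  congr 1
  fin_cases i <;> simp

lemma msupp_DKm {r : ℝ} (hr : r ≠ 0) (X : M2) : msupp (DKm r * X) = msupp X := by
  unfold msupp
  apply Finset.biUnion_congr rfl
  intro p _
  rw [DKm_mul_entry]
  apply support_C_mul
  obtain ⟨i, j⟩ := p
  fin_cases i <;> simp [hr, inv_ne_zero hr]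

lemma morder_DKm {r : ℝ} (hr : r ≠ 0) (X : M2) : morder (DKm r * X) = morder X := by
  unfold morder
  rw [msupp_DKm hr]

lemma lev_C_mul (x c : ℝ) (f : R2) : lev x (C c * f) = c * lev x f := by
  by_cases hc : c = 0
  · subst hc; simp [lev, Finsupp.sum]
  · unfold lev Finsupp.sum
    rw [support_C_mul hc]
    rw [Finset.mul_sum]
    apply Finset.sum_congr rfl
    intro n _
    rw [C_mul_apply]
    ring

end Supports
section Lists

def altRel (A B : M2) : Prop := ¬(IsUpper A ∧ IsUpper B) ∧ ¬(IsLower A ∧ IsLower B)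

lemma altRel_symm {A B : M2} (h : altRel A B) : altRel B A :=
  ⟨fun ⟨x, y⟩ => h.1 ⟨y, x⟩, fun ⟨x, y⟩ => h.2 ⟨y, x⟩⟩

def GoodL (G : GLS) (l : List M2) : Prop := ∀ A ∈ l, A ∈ G.Uset ∪ G.Lset ∧ A ≠ 1

def AltL (l : List M2) : Prop := List.Chain' altRel l

lemma alternating_iff_chain' {N : ℕ} (SS : Fin N → M2) :
    Alternating SS ↔ AltL (List.ofFn SS) := by
  rw [AltL, List.Chain', List.isChain_iff_getElem]
  constructor
  · intro h i hi
    simp only [List.length_ofFn] at hi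
    have := h i (by omega)
    simpa [List.get_ofFn, altRel, not_and] using this
  · intro h i hi
    have := h i (by simp; omega)
    simpa [List.get_ofFn, altRel, not_and] using this

lemma rep {G : GLS} {A : M2} (h1 : A ∈ G.Uset ∪ G.Lset) (h2 : A ≠ 1) :
    (∃ a ∈ G.P0, a ≠ 0 ∧ A = umat a) ∨ (∃ a ∈ G.P1, a ≠ 0 ∧ A = lmat a) := by
  rcases h1 with h | h
  · obtain ⟨a, ha, rfl⟩ := h
    exact Or.inl ⟨a, ha, fun h0 => h2 (by rw [h0, umat_zero]), rfl⟩
  · obtain ⟨a, ha, rfl⟩ := h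
    exact Or.inr ⟨a, ha, fun h0 => h2 (by rw [h0, lmat_zero]), rfl⟩

lemma not_isLower_umat {a : R2} (ha : a ≠ 0) : ¬ IsLower (umat a) := by
  rintro ⟨s, hs⟩
  exact ha (umat_ne_lmat hs).1

lemma not_isUpper_lmat {a : R2} (ha : a ≠ 0) : ¬ IsUpper (lmat a) := by
  rintro ⟨s, hs⟩
  exact ha (umat_ne_lmat hs.symm).2

lemma partialE_take {N : ℕ} (SS : Fin N → M2) (B : M2) :
    ∀ n, n ≤ N → partialE SS B n = (((List.ofFn SS).take n).reverse).prod * B := by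
  intro n
  induction n with
  | zero => intro _; simp [partialE]
  | succ n ih =>
    intro hn
    have hnN : n < N := by omega
    rw [partialE, dif_pos hnN, ih (le_of_lt hnN)]
    rw [List.take_succ]
    have : (List.ofFn SS)[n]? = some (SS ⟨n, hnN⟩) := by
      rw [List.getElem?_eq_getElem (by simp [hnN])]
      simp
    rw [this]
    simp [mul_assoc]

lemma partialE_eq_prodRev {N : ℕ} (SS : Fin N → M2) (B : M2) :
    partialE SS B N = prodRev SS * B := by
  rw [partialE_take SS B N le_rfl, prodRev]
  congr 2
  rw [List.take_of_length_le (by simp)]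

lemma morder_lt_core (G : GLS) (hOI : G.OrderInc) {B : M2} (hB : B ∈ G.Bset)
    {N : ℕ} (SS : Fin N → M2) (h : G.IrrCas SS) (hN : 0 < N) :
    morder (prodRev SS * B) > morder B := by
  have key := hOI B hB N SS h
  have main : ∀ n, n ≤ N → 0 < n → morder (partialE SS B n) > morder B := by
    intro n
    induction n with
    | zero => omega
    | succ n ih =>
      intro hn _
      rcases Nat.eq_zero_or_pos n with h0 | h0
      · subst h0
        have := key 0 (by omega)
        simpa [partialE] using this
      · have := key n (by omega)
        have := ih (by omega) h0
        omega
  have := main N le_rfl hN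
  rwa [partialE_eq_prodRev] at this

lemma K1list (G : GLS) (hOI : G.OrderInc) {B : M2} (hB : B ∈ G.Bset)
    {l : List M2} (hg : GoodL G l) (ha : AltL l) (hne : l ≠ []) :
    morder (l.prod * B) > morder B := by
  set N := l.reverse.length with hN
  set SS : Fin N → M2 := fun i => l.reverse[(i : ℕ)] with hSS
  have hofn : List.ofFn SS = l.reverse := List.ofFn_getElem (xs := l.reverse)
  have hprod : prodRev SS = l.prod := by
    rw [prodRev, hofn, List.reverse_reverse]
  have hIrr : G.IrrCas SS := by
    constructor
    · intro i
      apply hg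
      have : SS i ∈ l.reverse := List.getElem_mem _
      rwa [List.mem_reverse] at this
    · rw [show (Alternating SS) = (AlternatingP IsUpper IsLower SS) from rfl,
        show AlternatingP IsUpper IsLower SS ↔ _ from alternating_iff_chain' SS, AltL, hofn]
      rw [List.Chain', List.isChain_reverse]
      exact List.IsChain.imp (fun a b h => altRel_symm h) ha
  have hN0 : 0 < N := by
    simp [hN]
    exact List.length_pos_iff.mpr hne
  have := morder_lt_core G hOI hB SS hIrr hN0
  rwa [hprod] at this

end Lists
section Inv

lemma mem_UL_γ {G : GLS} (hD : G.DInv) {c : ℝ} (hc : c ≠ 0) {A : M2}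
    (h : A ∈ G.Uset ∪ G.Lset) : γm c A ∈ G.Uset ∪ G.Lset := by
  rcases h with h | h
  · left; rw [← (hD c hc).1]; exact ⟨A, h, rfl⟩
  · right; rw [← (hD c hc).2]; exact ⟨A, h, rfl⟩

lemma GoodL_map_γ {G : GLS} (hD : G.DInv) {c : ℝ} (hc : c ≠ 0) {l : List M2}
    (hg : GoodL G l) : GoodL G (l.map (γm c)) := by
  intro A' hA'
  obtain ⟨A, hA, rfl⟩ := List.mem_map.mp hA'
  exact ⟨mem_UL_γ hD hc (hg A hA).1, fun h => (hg A hA).2 ((γm_eq_one_iff hc).mp h)⟩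

lemma altRel_γ {c : ℝ} (hc : c ≠ 0) {A B : M2} (h : altRel A B) :
    altRel (γm c A) (γm c B) := by
  constructor
  · rintro ⟨x, y⟩
    exact h.1 ⟨(γm_isUpper hc).mp x, (γm_isUpper hc).mp y⟩
  · rintro ⟨x, y⟩
    exact h.2 ⟨(γm_isLower hc).mp x, (γm_isLower hc).mp y⟩

lemma AltL_map_γ {c : ℝ} (hc : c ≠ 0) {l : List M2} (ha : AltL l) :
    AltL (l.map (γm c)) :=
  (List.isChain_map (γm c)).mpr (ha.imp fun _ _ h => altRel_γ hc h)

lemma prod_mul_DKm {β : ℝ} (hβ : β ≠ 0) (l : List M2) :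
    l.prod * DKm β = DKm β * (l.map (γm β⁻¹)).prod := by
  induction l with
  | nil => simp
  | cons A l ih =>
    rw [List.prod_cons, List.map_cons, List.prod_cons, mul_assoc, ih,
      ← mul_assoc, ← mul_assoc, A_mul_DKm hβ A]

lemma DKm_mul_prod {β : ℝ} (hβ : β ≠ 0) (l : List M2) :
    DKm β * l.prod = (l.map (γm β)).prod * DKm β := by
  induction l with
  | nil => simp
  | cons A l ih =>
    rw [List.prod_cons, List.map_cons, List.prod_cons, ← mul_assoc, DKm_mul_A hβ A,
      mul_assoc, ih, ← mul_assoc]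

lemma K1D (G : GLS) (hD : G.DInv) (hOI : G.OrderInc) {B : M2} (hB : B ∈ G.Bset)
    {β : ℝ} (hβ : β ≠ 0) {l : List M2} (hg : GoodL G l) (ha : AltL l) (hne : l ≠ []) :
    morder (l.prod * (DKm β * B)) > morder (DKm β * B) := by
  rw [← mul_assoc, prod_mul_DKm hβ, mul_assoc, morder_DKm hβ, morder_DKm hβ]
  exact K1list G hOI hB (GoodL_map_γ hD (inv_ne_zero hβ) hg)
    (AltL_map_γ (inv_ne_zero hβ) ha) (by simpa using hne)

/-- Explicit inverse of a determinant-one 2×2 matrix (adjugate). -/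
def linv (A : M2) : M2 := !![A 1 1, -(A 0 1); -(A 1 0), A 0 0]

lemma linv_umat (a : R2) : linv (umat a) = umat (-a) := by
  simp [linv, umat]

lemma linv_lmat (a : R2) : linv (lmat a) = lmat (-a) := by
  simp [linv, lmat]

lemma linv_linv (A : M2) : linv (linv A) = A := by
  rw [Matrix.eta_fin_two A]
  simp [linv]

lemma isUpper_linv {A : M2} (h : IsUpper (linv A)) : IsUpper A := by
  obtain ⟨s, hs⟩ := h
  have : A = linv (umat s) := by rw [← hs, linv_linv]
  rw [this, linv_umat]
  exact ⟨_, rfl⟩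

lemma isLower_linv {A : M2} (h : IsLower (linv A)) : IsLower A := by
  obtain ⟨s, hs⟩ := h
  have : A = linv (lmat s) := by rw [← hs, linv_linv]
  rw [this, linv_lmat]
  exact ⟨_, rfl⟩

def invL (l : List M2) : List M2 := (l.map linv).reverse

lemma invL_cons (A : M2) (l : List M2) : invL (A :: l) = invL l ++ [linv A] := by
  simp [invL]

lemma GoodL_invL {G : GLS} {l : List M2} (hg : GoodL G l) : GoodL G (invL l) := by
  intro A' hA'
  rw [invL, List.mem_reverse] at hA'
  obtain ⟨A, hA, rfl⟩ := List.mem_map.mp hA'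
  rcases rep (hg A hA).1 (hg A hA).2 with ⟨a, ha, ha0, rfl⟩ | ⟨a, ha, ha0, rfl⟩
  · rw [linv_umat]
    exact ⟨Or.inl ⟨-a, neg_mem ha, rfl⟩, fun h => ha0 (by simpa using umat_eq_one h)⟩
  · rw [linv_lmat]
    exact ⟨Or.inr ⟨-a, neg_mem ha, rfl⟩, fun h => ha0 (by simpa using lmat_eq_one h)⟩

lemma AltL_invL {l : List M2} (ha : AltL l) : AltL (invL l) := by
  rw [invL, AltL, List.Chain', List.isChain_reverse]
  apply (List.isChain_map linv).mpr
  apply ha.imp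
  intro a b h
  exact ⟨fun ⟨x, y⟩ => h.1 ⟨isUpper_linv y, isUpper_linv x⟩,
    fun ⟨x, y⟩ => h.2 ⟨isLower_linv y, isLower_linv x⟩⟩

lemma linv_mul_self {G : GLS} {A : M2} (h1 : A ∈ G.Uset ∪ G.Lset) (h2 : A ≠ 1) :
    linv A * A = 1 := by
  rcases rep h1 h2 with ⟨a, _, _, rfl⟩ | ⟨a, _, _, rfl⟩
  · rw [linv_umat, umat_mul, neg_add_cancel, umat_zero]
  · rw [linv_lmat, lmat_mul, neg_add_cancel, lmat_zero]

lemma invL_prod {G : GLS} {l : List M2} (hg : GoodL G l) :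
    (invL l).prod * l.prod = 1 := by
  induction l with
  | nil => simp [invL]
  | cons A l ih =>
    rw [invL_cons, List.prod_append, List.prod_cons, List.prod_nil, mul_one, List.prod_cons]
    have h1 : linv A * (A * l.prod) = l.prod := by
      rw [← mul_assoc, linv_mul_self (hg A (by simp)).1 (hg A (by simp)).2, one_mul]
    rw [mul_assoc, h1]
    exact ih fun X hX => hg X (by simp [hX])

lemma no_eq (G : GLS) (hD : G.DInv) (hOI : G.OrderInc) {β γ : ℝ} {B C : M2}
    (hβ : β ≠ 0) (hγ : γ ≠ 0) (hB : B ∈ G.Bset) (hC : C ∈ G.Bset)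
    {w : List M2} (hg : GoodL G w) (ha : AltL w) (hne : w ≠ []) :
    w.prod * (DKm β * B) ≠ DKm γ * C := by
  intro h
  have h1 : morder (DKm γ * C) > morder (DKm β * B) := by
    rw [← h]; exact K1D G hD hOI hB hβ hg ha hne
  have h2 : morder (DKm β * B) > morder (DKm γ * C) := by
    have heq : (invL w).prod * (DKm γ * C) = DKm β * B := by
      rw [← h, ← mul_assoc, ← mul_assoc, invL_prod hg, one_mul]
    rw [← heq]
    exact K1D G hD hOI hC hγ (GoodL_invL hg) (AltL_invL ha) (by simp [invL, hne])
  omega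

end Inv
section Main

lemma altRel_UL {x y : M2} (hx : ¬IsLower x) (hy : ¬IsUpper y) : altRel x y :=
  ⟨fun ⟨_, q⟩ => hy q, fun ⟨p, _⟩ => hx p⟩

lemma altRel_LU {x y : M2} (hx : ¬IsUpper x) (hy : ¬IsLower y) : altRel x y :=
  ⟨fun ⟨p, _⟩ => hx p, fun ⟨_, q⟩ => hy q⟩

lemma not_isUpper_linv {x : M2} (h : ¬IsUpper x) : ¬IsUpper (linv x) :=
  fun hu => h (isUpper_linv hu)

lemma not_isLower_linv {x : M2} (h : ¬IsLower x) : ¬IsLower (linv x) :=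
  fun hl => h (isLower_linv hl)

lemma altRel_left_upper {a b : R2} (hb : b ≠ 0) {y : M2} (h : altRel (umat a) y) :
    altRel (umat b) y :=
  ⟨fun ⟨_, q⟩ => h.1 ⟨⟨a, rfl⟩, q⟩, fun ⟨p, _⟩ => (not_isLower_umat hb) p⟩

lemma altRel_left_lower {a b : R2} (hb : b ≠ 0) {y : M2} (h : altRel (lmat a) y) :
    altRel (lmat b) y :=
  ⟨fun ⟨p, _⟩ => (not_isUpper_lmat hb) p, fun ⟨_, q⟩ => h.2 ⟨⟨a, rfl⟩, q⟩⟩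

lemma GoodL_append {G : GLS} {u v : List M2} (hu : GoodL G u) (hv : GoodL G v) :
    GoodL G (u ++ v) := by
  intro A hA
  rcases List.mem_append.mp hA with h | h
  · exact hu A h
  · exact hv A h

lemma chain'_invL_append {m' mid : List M2} (ham' : AltL m')
    (hamid : List.Chain' altRel mid)
    (hj : ∀ x ∈ m'.head?, ∀ y ∈ mid.head?, altRel (linv x) y) :
    AltL (invL m' ++ mid) := by
  rw [AltL, List.Chain', List.isChain_append]
  refine ⟨AltL_invL ham', hamid, ?_⟩
  intro x hx y hy
  cases m' with
  | nil => simp [invL] at hx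
  | cons h t =>
    have hx' : x = linv h := by
      rw [invL_cons, List.getLast?_concat] at hx
      exact (by simpa using hx : _ = x).symm
    subst hx'
    exact hj h rfl y hy

lemma key_eq {G : GLS} {m' : List M2} (hg' : GoodL G m') {A A' : M2}
    (hinv : linv A' * A' = 1) {mid l' : List M2} {X Y : M2}
    (hmid : mid.prod = linv A' * (A :: l').prod)
    (heq : (A :: l').prod * X = (A' :: m').prod * Y) :
    (invL m' ++ mid).prod * X = Y := by
  rw [List.prod_append, hmid]
  calc (invL m').prod * (linv A' * (A :: l').prod) * X
      = (invL m').prod * (linv A' * ((A :: l').prod * X)) := by simp [mul_assoc]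
    _ = (invL m').prod * (linv A' * ((A' :: m').prod * Y)) := by rw [heq]
    _ = (invL m').prod * ((linv A' * A') * (m'.prod * Y)) := by
        simp [List.prod_cons, mul_assoc]
    _ = (invL m').prod * m'.prod * Y := by rw [hinv, one_mul, mul_assoc]
    _ = Y := by rw [invL_prod hg', one_mul]

lemma K2 (G : GLS) (hD : G.DInv) (hOI : G.OrderInc) :
    ∀ n (l m : List M2), l.length + m.length ≤ n →
    GoodL G l → AltL l → GoodL G m → AltL m →
    ∀ (β γ : ℝ) (B C : M2), β ≠ 0 → γ ≠ 0 → B ∈ G.Bset → C ∈ G.Bset →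
    l.prod * (DKm β * B) = m.prod * (DKm γ * C) →
    l = m ∧ DKm β * B = DKm γ * C := by
  intro n
  induction n with
  | zero =>
    intro l m hlen hgl hal hgm ham β γ B C hβ hγ hB hC heq
    have hl0 : l = [] := List.length_eq_zero_iff.mp (by omega)
    have hm0 : m = [] := List.length_eq_zero_iff.mp (by omega)
    subst hl0; subst hm0
    simpa using heq
  | succ n ih =>
    intro l m hlen hgl hal hgm ham β γ B C hβ hγ hB hC heq
    cases l with
    | nil =>
      cases m with
      | nil => simpa using heq
      | cons A' m' =>
        exfalso
        exact no_eq G hD hOI hγ hβ hC hB hgm ham (List.cons_ne_nil _ _)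
          (by rw [← heq]; simp)
    | cons A l' =>
      cases m with
      | nil =>
        exfalso
        exact no_eq G hD hOI hβ hγ hB hC hgl hal (List.cons_ne_nil _ _)
          (by rw [heq]; simp)
      | cons A' m' =>
        -- tails data
        have hgl' : GoodL G l' := fun X hX => hgl X (List.mem_cons_of_mem _ hX)
        have hgm' : GoodL G m' := fun X hX => hgm X (List.mem_cons_of_mem _ hX)
        have hal' : AltL l' := hal.tail
        have ham' : AltL m' := ham.tail
        have halc := List.isChain_cons.mp hal
        have hamc := List.isChain_cons.mp ham
        rcases rep (hgl A (by simp)).1 (hgl A (by simp)).2 with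
          ⟨a, haP, ha0, rfl⟩ | ⟨a, haP, ha0, rfl⟩ <;>
        rcases rep (hgm A' (by simp)).1 (hgm A' (by simp)).2 with
          ⟨b, hbP, hb0, rfl⟩ | ⟨b, hbP, hb0, rfl⟩
        -- case upper / upper
        · by_cases hab : a = b
          · subst hab
            have hcan : ∀ (t : List M2) (Z : M2),
                umat (-a) * ((umat a :: t).prod * Z) = t.prod * Z := by
              intro t Z
              rw [List.prod_cons, ← mul_assoc, ← mul_assoc, umat_mul,
                neg_add_cancel, umat_zero, one_mul]
            have heq' : l'.prod * (DKm β * B) = m'.prod * (DKm γ * C) := by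
              rw [← hcan l' (DKm β * B), ← hcan m' (DKm γ * C), heq]
            have hlen' : l'.length + m'.length ≤ n := by
              simp only [List.length_cons] at hlen; omega
            obtain ⟨hlm, hbase⟩ := ih l' m' hlen' hgl' hal' hgm' ham'
              β γ B C hβ hγ hB hC heq'
            exact ⟨by rw [hlm], hbase⟩
          · exfalso
            have hab0 : a - b ≠ 0 := sub_ne_zero.mpr hab
            set mid : List M2 := umat (a - b) :: l' with hmiddef
            have hmid : mid.prod = linv (umat b) * (umat a :: l').prod := by
              rw [hmiddef, List.prod_cons, List.prod_cons, linv_umat,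
                ← mul_assoc, umat_mul, neg_add_eq_sub]
            have hgmid : GoodL G mid := by
              intro X hX
              rcases List.mem_cons.mp hX with rfl | hX
              · exact ⟨Or.inl ⟨a - b, sub_mem haP hbP, rfl⟩,
                  fun h => hab0 (umat_eq_one h)⟩
              · exact hgl' X hX
            have hamid : List.Chain' altRel mid := by
              rw [hmiddef, List.Chain', List.isChain_cons]
              exact ⟨fun y hy => altRel_left_upper hab0 (halc.1 y hy), hal'⟩
            have hw : AltL (invL m' ++ mid) := by
              apply chain'_invL_append ham' hamid
              intro x hx y hy
              have hxA : altRel (umat b) x := hamc.1 x hx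
              have hxnu : ¬IsUpper x := fun h => hxA.1 ⟨⟨b, rfl⟩, h⟩
              have hy' : y = umat (a - b) := by
                rw [hmiddef] at hy; exact (by simpa using hy : _ = y).symm
              subst hy'
              exact altRel_LU (not_isUpper_linv hxnu) (not_isLower_umat hab0)
            exact no_eq G hD hOI hβ hγ hB hC
              (GoodL_append (GoodL_invL hgm') hgmid) hw (by simp [hmiddef])
              (key_eq hgm' (by rw [linv_umat, umat_mul, neg_add_cancel, umat_zero]) hmid heq)
        -- case upper / lower (mixed)
        · exfalso
          set mid : List M2 := lmat (-b) :: umat a :: l' with hmiddef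
          have hmid : mid.prod = linv (lmat b) * (umat a :: l').prod := by
            rw [hmiddef, List.prod_cons, linv_lmat]
          have hgmid : GoodL G mid := by
            intro X hX
            rcases List.mem_cons.mp hX with rfl | hX
            · exact ⟨Or.inr ⟨-b, neg_mem hbP, rfl⟩,
                fun h => hb0 (by simpa using lmat_eq_one h)⟩
            · exact hgl X hX
          have hamid : List.Chain' altRel mid := by
            rw [hmiddef, List.Chain', List.isChain_cons]
            refine ⟨?_, hal⟩
            intro y hy
            have hy' : y = umat a := by exact (by simpa using hy : _ = y).symm
            subst hy'
            exact altRel_LU (not_isUpper_lmat (neg_ne_zero.mpr hb0)) (not_isLower_umat ha0)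
          have hw : AltL (invL m' ++ mid) := by
            apply chain'_invL_append ham' hamid
            intro x hx y hy
            have hxA : altRel (lmat b) x := hamc.1 x hx
            have hxnl : ¬IsLower x := fun h => hxA.2 ⟨⟨b, rfl⟩, h⟩
            have hy' : y = lmat (-b) := by
              rw [hmiddef] at hy; exact (by simpa using hy : _ = y).symm
            subst hy'
            exact altRel_UL (not_isLower_linv hxnl) (not_isUpper_lmat (neg_ne_zero.mpr hb0))
          exact no_eq G hD hOI hβ hγ hB hC
            (GoodL_append (GoodL_invL hgm') hgmid) hw (by simp [hmiddef])
            (key_eq hgm' (by rw [linv_lmat, lmat_mul, neg_add_cancel, lmat_zero]) hmid heq)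
        -- case lower / upper (mixed)
        · exfalso
          set mid : List M2 := umat (-b) :: lmat a :: l' with hmiddef
          have hmid : mid.prod = linv (umat b) * (lmat a :: l').prod := by
            rw [hmiddef, List.prod_cons, linv_umat]
          have hgmid : GoodL G mid := by
            intro X hX
            rcases List.mem_cons.mp hX with rfl | hX
            · exact ⟨Or.inl ⟨-b, neg_mem hbP, rfl⟩,
                fun h => hb0 (by simpa using umat_eq_one h)⟩
            · exact hgl X hX
          have hamid : List.Chain' altRel mid := by
            rw [hmiddef, List.Chain', List.isChain_cons]
            refine ⟨?_, hal⟩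
            intro y hy
            have hy' : y = lmat a := by exact (by simpa using hy : _ = y).symm
            subst hy'
            exact altRel_UL (not_isLower_umat (neg_ne_zero.mpr hb0)) (not_isUpper_lmat ha0)
          have hw : AltL (invL m' ++ mid) := by
            apply chain'_invL_append ham' hamid
            intro x hx y hy
            have hxA : altRel (umat b) x := hamc.1 x hx
            have hxnu : ¬IsUpper x := fun h => hxA.1 ⟨⟨b, rfl⟩, h⟩
            have hy' : y = umat (-b) := by
              rw [hmiddef] at hy; exact (by simpa using hy : _ = y).symm
            subst hy'
            exact altRel_LU (not_isUpper_linv hxnu) (not_isLower_umat (neg_ne_zero.mpr hb0))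
          exact no_eq G hD hOI hβ hγ hB hC
            (GoodL_append (GoodL_invL hgm') hgmid) hw (by simp [hmiddef])
            (key_eq hgm' (by rw [linv_umat, umat_mul, neg_add_cancel, umat_zero]) hmid heq)
        -- case lower / lower
        · by_cases hab : a = b
          · subst hab
            have hcan : ∀ (t : List M2) (Z : M2),
                lmat (-a) * ((lmat a :: t).prod * Z) = t.prod * Z := by
              intro t Z
              rw [List.prod_cons, ← mul_assoc, ← mul_assoc, lmat_mul,
                neg_add_cancel, lmat_zero, one_mul]
            have heq' : l'.prod * (DKm β * B) = m'.prod * (DKm γ * C) := by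
              rw [← hcan l' (DKm β * B), ← hcan m' (DKm γ * C), heq]
            have hlen' : l'.length + m'.length ≤ n := by
              simp only [List.length_cons] at hlen; omega
            obtain ⟨hlm, hbase⟩ := ih l' m' hlen' hgl' hal' hgm' ham'
              β γ B C hβ hγ hB hC heq'
            exact ⟨by rw [hlm], hbase⟩
          · exfalso
            have hab0 : a - b ≠ 0 := sub_ne_zero.mpr hab
            set mid : List M2 := lmat (a - b) :: l' with hmiddef
            have hmid : mid.prod = linv (lmat b) * (lmat a :: l').prod := by
              rw [hmiddef, List.prod_cons, List.prod_cons, linv_lmat,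
                ← mul_assoc, lmat_mul, neg_add_eq_sub]
            have hgmid : GoodL G mid := by
              intro X hX
              rcases List.mem_cons.mp hX with rfl | hX
              · exact ⟨Or.inr ⟨a - b, sub_mem haP hbP, rfl⟩,
                  fun h => hab0 (lmat_eq_one h)⟩
              · exact hgl' X hX
            have hamid : List.Chain' altRel mid := by
              rw [hmiddef, List.Chain', List.isChain_cons]
              exact ⟨fun y hy => altRel_left_lower hab0 (halc.1 y hy), hal'⟩
            have hw : AltL (invL m' ++ mid) := by
              apply chain'_invL_append ham' hamid
              intro x hx y hy
              have hxA : altRel (lmat b) x := hamc.1 x hx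
              have hxnl : ¬IsLower x := fun h => hxA.2 ⟨⟨b, rfl⟩, h⟩
              have hy' : y = lmat (a - b) := by
                rw [hmiddef] at hy; exact (by simpa using hy : _ = y).symm
              subst hy'
              exact altRel_UL (not_isLower_linv hxnl) (not_isUpper_lmat hab0)
            exact no_eq G hD hOI hβ hγ hB hC
              (GoodL_append (GoodL_invL hgm') hgmid) hw (by simp [hmiddef])
              (key_eq hgm' (by rw [linv_lmat, lmat_mul, neg_add_cancel, lmat_zero]) hmid heq)

end Main
lemma GoodL_ofFn_rev {G : GLS} {N : ℕ} {SS : Fin N → M2} (h : G.IrrCas SS) :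
    GoodL G (List.ofFn SS).reverse := by
  intro A hA
  rw [List.mem_reverse, List.mem_ofFn] at hA
  obtain ⟨i, rfl⟩ := hA
  exact h.1 i

lemma AltL_ofFn_rev {G : GLS} {N : ℕ} {SS : Fin N → M2} (h : G.IrrCas SS) :
    AltL (List.ofFn SS).reverse := by
  rw [AltL, List.Chain', List.isChain_reverse]
  have : AltL (List.ofFn SS) := (alternating_iff_chain' SS).mp h.2
  exact this.imp fun _ _ hh => altRel_symm hh


/-- cf. Brislawn, GLS-I, Theorem 1; uniqueness of irreducible
group lifting factorizations.  In a `𝒟`-invariant, order-increasing group lifting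
structure, two irreducible group lifting factorizations of the same transfer
matrix agree modulo rescaling; if moreover the two base filter banks share a
nonzero entry value at some `z₀ ≠ 0`, the factorizations are identical. -/
theorem stmt9 (G : GLS) (hD : G.DInv) (hOI : G.OrderInc)
    (H : M2) (K K' : ℝ) (hK : K ≠ 0) (hK' : K' ≠ 0)
    (N N' : ℕ) (SS : Fin N → M2) (SS' : Fin N' → M2) (B B' : M2)
    (hB : B ∈ G.Bset) (hB' : B' ∈ G.Bset)
    (hIrr : G.IrrCas SS) (hIrr' : G.IrrCas SS')
    (hf : H = DKm K * prodRev SS * B) (hf' : H = DKm K' * prodRev SS' * B') :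
    N' = N ∧
    B' = DKm (K / K') * B ∧
    (∀ (i : ℕ) (h : i < N) (h' : i < N'), SS' ⟨i, h'⟩ = γm (K / K') (SS ⟨i, h⟩)) ∧
    ((∃ (i j : Fin 2) (z₀ : ℝ), z₀ ≠ 0 ∧
        lev z₀ (B' i j) = lev z₀ (B i j) ∧ lev z₀ (B i j) ≠ 0) →
      K' = K ∧ B' = B ∧
        ∀ (i : ℕ) (h : i < N) (h' : i < N'), SS' ⟨i, h'⟩ = SS ⟨i, h⟩) := by
  set l : List M2 := (List.ofFn SS).reverse with hl
  set m : List M2 := (List.ofFn SS').reverse with hm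
  have hlp : prodRev SS = l.prod := rfl
  have hmp : prodRev SS' = m.prod := rfl
  have e1 : (l.map (γm K)).prod * (DKm K * B) = (m.map (γm K')).prod * (DKm K' * B') := by
    have t1 : DKm K * prodRev SS * B = (l.map (γm K)).prod * (DKm K * B) := by
      rw [hlp, DKm_mul_prod hK l, mul_assoc]
    have t2 : DKm K' * prodRev SS' * B' = (m.map (γm K')).prod * (DKm K' * B') := by
      rw [hmp, DKm_mul_prod hK' m, mul_assoc]
    rw [← t1, ← t2, ← hf, ← hf']
  obtain ⟨hlm, hbase⟩ := K2 G hD hOI ((l.map (γm K)).length + (m.map (γm K')).length)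
    (l.map (γm K)) (m.map (γm K')) le_rfl
    (GoodL_map_γ hD hK (GoodL_ofFn_rev hIrr)) (AltL_map_γ hK (AltL_ofFn_rev hIrr))
    (GoodL_map_γ hD hK' (GoodL_ofFn_rev hIrr')) (AltL_map_γ hK' (AltL_ofFn_rev hIrr'))
    K K' B B' hK hK' hB hB' e1
  -- B' in terms of B
  have hB'eq : B' = DKm (K / K') * B := by
    have h2 := congrArg (fun Z => DKm K'⁻¹ * Z) hbase
    rw [← mul_assoc, ← mul_assoc, DKm_inv_mul hK', one_mul, DKm_mul] at h2
    rw [← h2]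
    congr 1
    rw [div_eq_mul_inv, mul_comm]
  -- lengths
  have hNN : N = N' := by
    have := congrArg List.length hlm
    simpa [hl, hm] using this
  subst hNN
  -- factors
  have hfe : ∀ i : Fin N, γm K (SS i) = γm K' (SS' i) := by
    have h3 : (List.ofFn SS).map (γm K) = (List.ofFn SS').map (γm K') := by
      apply List.reverse_injective
      rw [← List.map_reverse, ← List.map_reverse]
      exact hlm
    rw [List.map_ofFn, List.map_ofFn] at h3
    have h4 := List.ofFn_injective h3
    intro i
    exact congrFun h4 i
  have hSSfact : ∀ (i : ℕ) (h : i < N) (h' : i < N),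
      SS' ⟨i, h'⟩ = γm (K / K') (SS ⟨i, h⟩) := by
    intro i h h'
    have e := hfe ⟨i, h⟩
    have : SS' ⟨i, h⟩ = γm K'⁻¹ (γm K' (SS' ⟨i, h⟩)) := by
      rw [γm_comp (inv_ne_zero hK') hK', inv_mul_cancel₀ hK', γm_one]
    rw [show (⟨i, h'⟩ : Fin N) = ⟨i, h⟩ from rfl, this, ← e,
      γm_comp (inv_ne_zero hK') hK, show K'⁻¹ * K = K / K' by rw [div_eq_mul_inv, mul_comm]]
  refine ⟨rfl, hB'eq, hSSfact, ?_⟩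
  rintro ⟨i, j, z₀, hz0, hlev, hne⟩
  have hent : B' i j = C (![(K / K')⁻¹, K / K'] i) * B i j := by
    rw [hB'eq, DKm_mul_entry]
  have hlev2 : (![(K / K')⁻¹, K / K'] i) * lev z₀ (B i j) = lev z₀ (B i j) := by
    rw [← lev_C_mul, ← hent, hlev]
  have hc1 : (![(K / K')⁻¹, K / K'] i) = 1 := by
    by_contra hc
    apply hne
    have := mul_right_cancel₀ hne (hlev2.trans (one_mul _).symm)
    exact absurd this hc
  have hKK : K = K' := by
    fin_cases i
    · have h5 : (K / K')⁻¹ = 1 := by simpa using hc1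
      rw [inv_eq_one] at h5
      exact (div_eq_one_iff_eq hK').mp h5
    · have h5 : K / K' = 1 := by simpa using hc1
      exact (div_eq_one_iff_eq hK').mp h5
  have hr1 : K / K' = 1 := by rw [hKK, div_self hK']
  refine ⟨hKK.symm, ?_, ?_⟩
  · rw [hB'eq, hr1, DKm_one, one_mul]
  · intro i h h'
    rw [hSSfact i h h', hr1, γm_one]
end
end
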